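/- For each fixed x ∈ (0,∞), the ratio t ↦ (Φ(x) - Φ((1-t)x))/t is increasing in t ∈ (0,1), where Φ is the standard normal distribution function. -/

import Mathlib

open MeasureTheory Set intervalIntegral

noncomputable def stdNormalCDF (x : ℝ) : ℝ :=
  ∫ t in Set.Iic x, (Real.sqrt (2 * Real.pi))⁻¹ * Real.exp (-t ^ 2 / 2)

noncomputable def gpdf (t : ℝ) : ℝ := (Real.sqrt (2 * Real.pi))⁻¹ * Real.exp (-t ^ 2 / 2)

lemma gpdf_continuous : Continuous gpdf := by
  unfold gpdf; continuity

lemma gpdf_integrable : Integrable gpdf := by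
  have h : Integrable (fun t : ℝ => Real.exp (-(1/2 : ℝ) * t ^ 2)) :=
    integrable_exp_neg_mul_sq (by norm_num)
  have h2 := h.const_mul (Real.sqrt (2 * Real.pi))⁻¹
  refine h2.congr (Filter.Eventually.of_forall fun t => ?_)
  unfold gpdf; ring_nf

lemma cdf_sub (a b : ℝ) : stdNormalCDF b - stdNormalCDF a = ∫ t in a..b, gpdf t := by
  unfold stdNormalCDF
  exact intervalIntegral.integral_Iic_sub_Iic gpdf_integrable.integrableOn
    gpdf_integrable.integrableOn

lemma hasDerivAt_f (x t : ℝ) :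
    HasDerivAt (fun t : ℝ => stdNormalCDF x - stdNormalCDF ((1 - t) * x))
      (x * gpdf ((1 - t) * x)) t := by
  have hG : HasDerivAt (fun u : ℝ => ∫ s in u..x, gpdf s) (-gpdf ((1 - t) * x)) ((1 - t) * x) :=
    integral_hasDerivAt_left (gpdf_integrable.intervalIntegrable)
      gpdf_continuous.aestronglyMeasurable.stronglyMeasurableAtFilter
      gpdf_continuous.continuousAt
  have hu : HasDerivAt (fun t : ℝ => (1 - t) * x) (-x) t := by
    simpa using ((hasDerivAt_const t (1:ℝ)).sub (hasDerivAt_id t)).mul_const x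
  have hcomp := hG.comp t hu
  have heq : (fun t : ℝ => stdNormalCDF x - stdNormalCDF ((1 - t) * x)) =
      fun t : ℝ => ∫ s in (1 - t) * x..x, gpdf s := by
    funext t; exact cdf_sub _ _
  rw [heq]
  exact hcomp.congr_deriv (by ring)

lemma gpdf_strict_anti : StrictAntiOn gpdf (Set.Ici 0) := by
  intro a ha b hb hab
  unfold gpdf
  have h2 : (0:ℝ) < (Real.sqrt (2 * Real.pi))⁻¹ := by
    positivity
  apply mul_lt_mul_of_pos_left _ h2
  apply Real.exp_lt_exp.mpr
  have : a ^ 2 < b ^ 2 := by nlinarith [ha.out, hb.out]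
  linarith

theorem ratio_increasing (x : ℝ) (hx : 0 < x) :
    StrictMonoOn (fun t : ℝ => (stdNormalCDF x - stdNormalCDF ((1 - t) * x)) / t)
      (Set.Ioo 0 1) := by
  set f : ℝ → ℝ := fun t => stdNormalCDF x - stdNormalCDF ((1 - t) * x) with hf
  have hderiv : ∀ t : ℝ, deriv f t = x * gpdf ((1 - t) * x) := fun t =>
    (hasDerivAt_f x t).deriv
  have hconv : StrictConvexOn ℝ (Set.Icc 0 1) f := by
    apply StrictMonoOn.strictConvexOn_of_deriv (convex_Icc 0 1)
    · exact fun t _ => ((hasDerivAt_f x t).continuousAt).continuousWithinAt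
    · rw [interior_Icc]
      intro a ha b hb hab
      rw [hderiv, hderiv]
      apply mul_lt_mul_of_pos_left _ hx
      apply gpdf_strict_anti
      · exact le_of_lt (mul_pos (by linarith [hb.2]) hx)
      · exact le_of_lt (mul_pos (by linarith [ha.2]) hx)
      · have : 1 - b < 1 - a := by linarith [hab]
        exact mul_lt_mul_of_pos_right this hx
  intro a ha b hb hab
  have h0 : (0:ℝ) ∈ Set.Icc (0:ℝ) 1 := by constructor <;> norm_num
  have haI : a ∈ Set.Icc (0:ℝ) 1 := ⟨le_of_lt ha.1, le_of_lt ha.2⟩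
  have hbI : b ∈ Set.Icc (0:ℝ) 1 := ⟨le_of_lt hb.1, le_of_lt hb.2⟩
  have key := hconv.secant_strict_mono h0 haI hbI (ne_of_gt ha.1) (ne_of_gt hb.1) hab
  have hf0 : f 0 = 0 := by simp [hf]
  simpa [hf0] using key
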